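/- Let m₀, m₁ ∈ ℝⁿ, let σᵢ > 0 and 0 < hᵢ ≤ 1 for i = 1,…,n, and suppose that m₀ᵢ = m₁ᵢ whenever hᵢ = 1. Set Σ₀ = diag(σ₁²,…,σₙ²) and Σ₁ = diag(h₁σ₁²,…,hₙσₙ²). Then the global minimum of x ↦ f_{m₀,Σ₀}(x)/f_{m₁,Σ₁}(x) over ℝⁿ is attained and equals (∏_{i=1}^{n} hᵢ)^{1/2} · exp(-(1/2) Σ_{i : hᵢ<1} (m₁ᵢ - m₀ᵢ)² / ((1-hᵢ) σᵢ²)). -/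

import Mathlib

open Matrix MeasureTheory

noncomputable def gaussianPDF {n : ℕ} (m : Fin n → ℝ) (S : Matrix (Fin n) (Fin n) ℝ)
    (x : Fin n → ℝ) : ℝ :=
  (2 * Real.pi) ^ (-(n : ℝ) / 2) * S.det ^ (-(1 : ℝ) / 2) *
    Real.exp (-(1 / 2) * ((x - m) ⬝ᵥ (S⁻¹ *ᵥ (x - m))))

lemma gaussianPDF_diagonal {n : ℕ} (m : Fin n → ℝ) (d : Fin n → ℝ) (hd : ∀ i, d i ≠ 0)
    (x : Fin n → ℝ) :
    gaussianPDF m (Matrix.diagonal d) x =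
      (2 * Real.pi) ^ (-(n : ℝ) / 2) * (∏ i, d i) ^ (-(1 : ℝ) / 2) *
        Real.exp (-(1 / 2) * ∑ i, (x i - m i) ^ 2 / d i) := by
  have hinv : (Matrix.diagonal d)⁻¹ = Matrix.diagonal (fun i => (d i)⁻¹) :=
    Matrix.inv_eq_right_inv (by
      rw [Matrix.diagonal_mul_diagonal]
      convert Matrix.diagonal_one using 2
      ext i
      exact mul_inv_cancel₀ (hd i))
  unfold gaussianPDF
  rw [Matrix.det_diagonal, hinv]
  congr 2
  rw [dotProduct]
  congr 1
  apply Finset.sum_congr rfl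
  intro i _
  rw [Matrix.mulVec_diagonal]
  simp only [Pi.sub_apply]
  ring

lemma coord_identity (a b s hv t : ℝ) (hs : s ≠ 0) (h0 : hv ≠ 0) (h1 : (1:ℝ) - hv ≠ 0) :
    (t - a) ^ 2 / s - (t - b) ^ 2 / (hv * s)
      = (b - a) ^ 2 / ((1 - hv) * s)
        - ((1 - hv) * t - (b - hv * a)) ^ 2 / (hv * (1 - hv) * s) := by
  field_simp
  ring

lemma coord_le (a b s hv : ℝ) (hs : 0 < s) (h0 : 0 < hv) (h1 : hv ≤ 1) (hm : hv = 1 → a = b)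
    (t : ℝ) :
    (t - a) ^ 2 / s - (t - b) ^ 2 / (hv * s)
      ≤ if hv < 1 then (b - a) ^ 2 / ((1 - hv) * s) else 0 := by
  by_cases hlt : hv < 1
  · rw [if_pos hlt,
      coord_identity a b s hv t hs.ne' h0.ne' (by linarith)]
    have h1v : (0:ℝ) < 1 - hv := by linarith
    have : 0 ≤ ((1 - hv) * t - (b - hv * a)) ^ 2 / (hv * (1 - hv) * s) :=
      div_nonneg (sq_nonneg _) (mul_pos (mul_pos h0 h1v) hs).le
    linarith
  · have heq : hv = 1 := le_antisymm h1 (not_lt.mp hlt)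
    have hab : a = b := hm heq
    rw [if_neg hlt, heq, hab, one_mul, sub_self]

lemma coord_eq (a b s hv : ℝ) (hs : 0 < s) (h0 : 0 < hv) (h1 : hv ≤ 1) (hm : hv = 1 → a = b) :
    (((if hv < 1 then (b - hv * a) / (1 - hv) else a)) - a) ^ 2 / s
      - (((if hv < 1 then (b - hv * a) / (1 - hv) else a)) - b) ^ 2 / (hv * s)
      = if hv < 1 then (b - a) ^ 2 / ((1 - hv) * s) else 0 := by
  by_cases hlt : hv < 1
  · have h1' : (1:ℝ) - hv ≠ 0 := by linarith
    rw [if_pos hlt, if_pos hlt,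
      coord_identity a b s hv _ hs.ne' h0.ne' h1']
    have : (1 - hv) * ((b - hv * a) / (1 - hv)) - (b - hv * a) = 0 := by
      field_simp
      ring
    rw [this]
    simp
  · have heq : hv = 1 := le_antisymm h1 (not_lt.mp hlt)
    have hab : a = b := hm heq
    rw [if_neg hlt, if_neg hlt, heq, hab, one_mul, sub_self]

/-- For diagonal covariances `Σ₀ = diag(σᵢ²)`, `Σ₁ = diag(hᵢσᵢ²)` with
`0 < hᵢ ≤ 1` and `m₀ᵢ = m₁ᵢ` whenever `hᵢ = 1`, the global minimum of the ratio
`f_{m₀,Σ₀}/f_{m₁,Σ₁}` is attained and equals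
`(∏ hᵢ)^{1/2} · exp(-(1/2) ∑_{i : hᵢ<1} (m₁ᵢ - m₀ᵢ)²/((1-hᵢ)σᵢ²))`. -/
theorem ratio_min_value_diagonal {n : ℕ} (m₀ m₁ : Fin n → ℝ)
    (σ h : Fin n → ℝ) (hσ : ∀ i, 0 < σ i) (hh0 : ∀ i, 0 < h i) (hh1 : ∀ i, h i ≤ 1)
    (hmean : ∀ i, h i = 1 → m₀ i = m₁ i) :
    ∃ x₀ : Fin n → ℝ,
      (∀ x : Fin n → ℝ,
        gaussianPDF m₀ (Matrix.diagonal (fun i => σ i ^ 2)) x₀ /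
            gaussianPDF m₁ (Matrix.diagonal (fun i => h i * σ i ^ 2)) x₀ ≤
          gaussianPDF m₀ (Matrix.diagonal (fun i => σ i ^ 2)) x /
            gaussianPDF m₁ (Matrix.diagonal (fun i => h i * σ i ^ 2)) x) ∧
      gaussianPDF m₀ (Matrix.diagonal (fun i => σ i ^ 2)) x₀ /
          gaussianPDF m₁ (Matrix.diagonal (fun i => h i * σ i ^ 2)) x₀ =
        (∏ i : Fin n, h i) ^ ((1 : ℝ) / 2) *
          Real.exp (-(1 / 2) *
            ∑ i : Fin n,
              if h i < 1 then (m₁ i - m₀ i) ^ 2 / ((1 - h i) * σ i ^ 2) else 0) := by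
  have hd0 : ∀ i, σ i ^ 2 ≠ 0 := fun i => (pow_pos (hσ i) 2).ne'
  have hd1 : ∀ i, h i * σ i ^ 2 ≠ 0 := fun i => (mul_pos (hh0 i) (pow_pos (hσ i) 2)).ne'
  set H : ℝ := ∏ i : Fin n, h i with hH
  have hHpos : 0 < H := Finset.prod_pos (fun i _ => hh0 i)
  have hP0pos : 0 < ∏ i : Fin n, σ i ^ 2 := Finset.prod_pos (fun i _ => pow_pos (hσ i) 2)
  -- ratio formula
  have key : ∀ x : Fin n → ℝ,
      gaussianPDF m₀ (Matrix.diagonal (fun i => σ i ^ 2)) x /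
          gaussianPDF m₁ (Matrix.diagonal (fun i => h i * σ i ^ 2)) x
        = H ^ ((1 : ℝ) / 2) * Real.exp (-(1 / 2) *
            ∑ i, ((x i - m₀ i) ^ 2 / σ i ^ 2 - (x i - m₁ i) ^ 2 / (h i * σ i ^ 2))) := by
    intro x
    rw [gaussianPDF_diagonal _ _ hd0, gaussianPDF_diagonal _ _ hd1]
    have hCpos : (0:ℝ) < (2 * Real.pi) ^ (-(n : ℝ) / 2) :=
      Real.rpow_pos_of_pos (by positivity) _
    have hprod : ∏ i : Fin n, (h i * σ i ^ 2) = H * ∏ i : Fin n, σ i ^ 2 :=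
      Finset.prod_mul_distrib
    rw [mul_assoc, mul_assoc, mul_div_mul_left _ _ hCpos.ne', hprod,
      Real.mul_rpow hHpos.le hP0pos.le]
    have hHe : H ^ ((-1 : ℝ) / 2) = (H ^ ((1 : ℝ) / 2))⁻¹ := by
      rw [← Real.rpow_neg hHpos.le]
      norm_num
    rw [hHe]
    have hEdiff : (-(1 / 2) * ∑ i, (x i - m₀ i) ^ 2 / σ i ^ 2)
        - (-(1 / 2) * ∑ i, (x i - m₁ i) ^ 2 / (h i * σ i ^ 2)) = -(1 / 2) *
            ∑ i, ((x i - m₀ i) ^ 2 / σ i ^ 2 - (x i - m₁ i) ^ 2 / (h i * σ i ^ 2)) := by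
      rw [Finset.sum_sub_distrib]
      ring
    rw [← hEdiff, Real.exp_sub]
    have hu : H ^ ((1 : ℝ) / 2) ≠ 0 := (Real.rpow_pos_of_pos hHpos _).ne'
    have hv : (∏ i : Fin n, σ i ^ 2) ^ ((-1 : ℝ) / 2) ≠ 0 :=
      (Real.rpow_pos_of_pos hP0pos _).ne'
    have hB : Real.exp (-(1 / 2) * ∑ i, (x i - m₁ i) ^ 2 / (h i * σ i ^ 2)) ≠ 0 :=
      (Real.exp_pos _).ne'
    field_simp
  refine ⟨fun i => if h i < 1 then (m₁ i - h i * m₀ i) / (1 - h i) else m₀ i, ?_, ?_⟩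
  · intro x
    rw [key, key]
    have heq : (∑ i, (((if h i < 1 then (m₁ i - h i * m₀ i) / (1 - h i) else m₀ i) - m₀ i) ^ 2 / σ i ^ 2
          - ((if h i < 1 then (m₁ i - h i * m₀ i) / (1 - h i) else m₀ i) - m₁ i) ^ 2 / (h i * σ i ^ 2)))
          = ∑ i, (if h i < 1 then (m₁ i - m₀ i) ^ 2 / ((1 - h i) * σ i ^ 2) else 0) :=
      Finset.sum_congr rfl fun i _ =>
        coord_eq (m₀ i) (m₁ i) (σ i ^ 2) (h i) (pow_pos (hσ i) 2) (hh0 i) (hh1 i) (hmean i)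
    have hgle : (∑ i, ((x i - m₀ i) ^ 2 / σ i ^ 2 - (x i - m₁ i) ^ 2 / (h i * σ i ^ 2)))
        ≤ ∑ i, (((if h i < 1 then (m₁ i - h i * m₀ i) / (1 - h i) else m₀ i) - m₀ i) ^ 2 / σ i ^ 2
          - ((if h i < 1 then (m₁ i - h i * m₀ i) / (1 - h i) else m₀ i) - m₁ i) ^ 2 / (h i * σ i ^ 2)) := by
      rw [heq]
      exact Finset.sum_le_sum fun i _ =>
        coord_le (m₀ i) (m₁ i) (σ i ^ 2) (h i) (pow_pos (hσ i) 2) (hh0 i) (hh1 i) (hmean i) (x i)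
    have hexp : Real.exp (-(1 / 2) *
          ∑ i, (((if h i < 1 then (m₁ i - h i * m₀ i) / (1 - h i) else m₀ i) - m₀ i) ^ 2 / σ i ^ 2
            - ((if h i < 1 then (m₁ i - h i * m₀ i) / (1 - h i) else m₀ i) - m₁ i) ^ 2 / (h i * σ i ^ 2)))
        ≤ Real.exp (-(1 / 2) *
          ∑ i, ((x i - m₀ i) ^ 2 / σ i ^ 2 - (x i - m₁ i) ^ 2 / (h i * σ i ^ 2))) := by
      apply Real.exp_le_exp.mpr
      linarith
    exact mul_le_mul_of_nonneg_left hexp (Real.rpow_nonneg hHpos.le _)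
  · rw [key]
    congr 2
    congr 1
    exact Finset.sum_congr rfl fun i _ =>
      coord_eq (m₀ i) (m₁ i) (σ i ^ 2) (h i) (pow_pos (hσ i) 2) (hh0 i) (hh1 i) (hmean i)
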